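/- There is an orthogonal basis v_1, ..., v_m of V with h(v_i, v_i) = 1 for i < m, and h(v_m, v_m) = 1 if the norm map Q : A* → R* is surjective, while h(v_m, v_m) ∈ {1, ε} if Q(A*) = R*², where ε is a fixed non-square unit of R. -/

import Mathlib

open MulOpposite

/-- A `*`-hermitian form on a right `A`-module `V` (right modules are encoded as
modules over the opposite ring `Aᵐᵒᵖ`): it is additive and `A`-linear in the second
variable and satisfies `h v u = (h u v)*`. -/
structure HermitianForm (A V : Type*) [Ring A] [StarRing A] [AddCommGroup V]
    [Module Aᵐᵒᵖ V] where
  toFun : V → V → A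
  add_right : ∀ u v w : V, toFun u (v + w) = toFun u v + toFun u w
  smul_right : ∀ (a : A) (u v : V), toFun u (op a • v) = toFun u v * a
  conj_symm : ∀ u v : V, toFun v u = star (toFun u v)

namespace HermitianForm

variable {A V : Type*} [Ring A] [StarRing A] [AddCommGroup V] [Module Aᵐᵒᵖ V]

/-- Non-degeneracy: the map `u ↦ h u -` is a bijection of `V` onto the dual module. -/
def Nondeg (h : HermitianForm A V) : Prop :=
  ∀ φ : V →ₗ[Aᵐᵒᵖ] A, ∃! u : V, ∀ v : V, h.toFun u v = φ v

end HermitianForm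

/-- A vector of the free module `V` of rank `m` is primitive if it belongs to a basis. -/
def IsPrimitive (A : Type*) {V : Type*} [Ring A] [AddCommGroup V] [Module Aᵐᵒᵖ V]
    (m : ℕ) (v : V) : Prop :=
  ∃ (b : Module.Basis (Fin m) Aᵐᵒᵖ V) (i : Fin m), b i = v

section LocalFacts
variable {A : Type*} [Ring A] [IsLocalRing A]

lemma loc_add {a b : A} (ha : ¬IsUnit a) (hb : ¬IsUnit b) : ¬IsUnit (a + b) := by
  rintro ⟨u, hu⟩
  have h1 : (↑u⁻¹ * a) + (↑u⁻¹ * b) = 1 := by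
    rw [← mul_add, ← hu, u.inv_mul]
  rcases IsLocalRing.isUnit_or_isUnit_of_add_one h1 with h | h
  · exact ha (by simpa [← mul_assoc, u.mul_inv] using (u.isUnit.mul h))
  · exact hb (by simpa [← mul_assoc, u.mul_inv] using (u.isUnit.mul h))

lemma loc_idem {e : A} (he : e * e = e) : e = 0 ∨ e = 1 := by
  have h1 : e + (1 - e) = 1 := by abel
  rcases IsLocalRing.isUnit_or_isUnit_of_add_one h1 with h | h
  · right
    rcases h with ⟨u, hu⟩
    have h2 : (↑u⁻¹ : A) * (e * e) = ↑u⁻¹ * e := by rw [he]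
    rw [← hu, ← mul_assoc, u.inv_mul, one_mul] at h2
    rw [← hu]
    exact h2
  · left
    rcases h with ⟨u, hu⟩
    have h2 : (1 - e) * e = 0 := by rw [sub_mul, one_mul, he, sub_self]
    have h3 : (↑u⁻¹ : A) * ((1 - e) * e) = 0 := by rw [h2, mul_zero]
    rwa [← hu, ← mul_assoc, u.inv_mul, one_mul] at h3

lemma loc_mul_left {a : A} (ha : ¬IsUnit a) (x : A) : ¬IsUnit (x * a) := by
  rintro ⟨u, hu⟩
  have hya : (↑u⁻¹ * x) * a = 1 := by rw [mul_assoc, ← hu, u.inv_mul]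
  generalize hy : (↑u⁻¹ * x : A) = y at hya
  have he : (a * y) * (a * y) = a * y := by
    rw [mul_assoc, ← mul_assoc y, hya, one_mul]
  rcases loc_idem he with h | h
  · have h0 : a = 0 := by
      calc a = a * (y * a) := by rw [hya, mul_one]
        _ = (a * y) * a := by rw [mul_assoc]
        _ = 0 := by rw [h, zero_mul]
    rw [h0, mul_zero] at hya
    exact zero_ne_one hya
  · exact ha ⟨⟨a, y, h, hya⟩, rfl⟩

lemma loc_mul_right {a : A} (ha : ¬IsUnit a) (x : A) : ¬IsUnit (a * x) := by
  rintro ⟨u, hu⟩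
  have hay : a * (x * ↑u⁻¹) = 1 := by rw [← mul_assoc, ← hu, u.mul_inv]
  generalize hy : (x * ↑u⁻¹ : A) = y at hay
  have he : (y * a) * (y * a) = y * a := by
    rw [mul_assoc, ← mul_assoc a, hay, one_mul]
  rcases loc_idem he with h | h
  · have h0 : a = 0 := by
      calc a = (a * y) * a := by rw [hay, one_mul]
        _ = a * (y * a) := by rw [mul_assoc]
        _ = 0 := by rw [h, mul_zero]
    rw [h0, zero_mul] at hay
    exact zero_ne_one hay
  · exact ha ⟨⟨a, y, hay, h⟩, rfl⟩

end LocalFacts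

namespace HermitianForm
variable {A V : Type*} [Ring A] [StarRing A] [AddCommGroup V] [Module Aᵐᵒᵖ V]
variable (h : HermitianForm A V)

/-- `h u -` as a linear map into `A` (as `Aᵐᵒᵖ`-module). -/
def lin (u : V) : V →ₗ[Aᵐᵒᵖ] A where
  toFun := h.toFun u
  map_add' := h.add_right u
  map_smul' := by
    intro c v
    have := h.smul_right (unop c) u v
    rw [op_unop] at this
    simp only [RingHom.id_apply, MulOpposite.smul_eq_mul_unop]
    exact this

@[simp] lemma lin_apply (u v : V) : h.lin u v = h.toFun u v := rfl

lemma zero_right (u : V) : h.toFun u 0 = 0 := (h.lin u).map_zero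

lemma zero_left (v : V) : h.toFun 0 v = 0 := by
  rw [h.conj_symm, h.zero_right, star_zero]

lemma add_left (u u' v : V) : h.toFun (u + u') v = h.toFun u v + h.toFun u' v := by
  rw [h.conj_symm, h.add_right, star_add, ← h.conj_symm, ← h.conj_symm]

lemma smul_left (a : A) (u v : V) :
    h.toFun (op a • u) v = star a * h.toFun u v := by
  rw [h.conj_symm, h.smul_right, star_mul, ← h.conj_symm]

lemma smul_right' (c : Aᵐᵒᵖ) (u v : V) : h.toFun u (c • v) = h.toFun u v * unop c := by
  have := h.smul_right (unop c) u v; rwa [op_unop] at this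

lemma smul_left' (c : Aᵐᵒᵖ) (u v : V) :
    h.toFun (c • u) v = star (unop c) * h.toFun u v := by
  have := h.smul_left (unop c) u v; rwa [op_unop] at this

lemma sub_right (u v w : V) : h.toFun u (v - w) = h.toFun u v - h.toFun u w :=
  map_sub (h.lin u) v w

lemma sub_left (u u' v : V) : h.toFun (u - u') v = h.toFun u v - h.toFun u' v := by
  rw [h.conj_symm, h.sub_right, star_sub, ← h.conj_symm, ← h.conj_symm]

end HermitianForm

section BasisChange
variable {A V : Type*} [Ring A] [AddCommGroup V] [Module Aᵐᵒᵖ V]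
variable {ι : Type*}

/-- Shear: subtract `ψ (v j) • v i0` from every basis vector other than `v i0`. -/
lemma basis_shear (v : Module.Basis ι Aᵐᵒᵖ V) (i0 : ι) (ψ : V →ₗ[Aᵐᵒᵖ] Aᵐᵒᵖ)
    (hψ : ψ (v i0) = 1) :
    ∃ w : Module.Basis ι Aᵐᵒᵖ V, w i0 = v i0 ∧ ∀ j, j ≠ i0 → w j = v j - ψ (v j) • v i0 := by
  classical
  set f : V →ₗ[Aᵐᵒᵖ] V :=
    LinearMap.id - ψ.smulRight (v i0) + (v.coord i0).smulRight (v i0) with hfdef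
  set g : V →ₗ[Aᵐᵒᵖ] V :=
    LinearMap.id + ψ.smulRight (v i0) - (v.coord i0).smulRight (v i0) with hgdef
  have happ : ∀ (x : V), f x = x - ψ x • v i0 + v.repr x i0 • v i0 := by
    intro x; simp [hfdef, Module.Basis.coord_apply]
  have gapp : ∀ (x : V), g x = x + ψ x • v i0 - v.repr x i0 • v i0 := by
    intro x; simp [hgdef, Module.Basis.coord_apply]
  have hf : ∀ j, j ≠ i0 → f (v j) = v j - ψ (v j) • v i0 := by
    intro j hj
    rw [happ]
    simp [Module.Basis.repr_self, Finsupp.single_apply, hj, Ne.symm hj]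
  have hfi : f (v i0) = v i0 := by
    rw [happ, hψ]
    simp
  have hgf : g.comp f = LinearMap.id := by
    apply Module.Basis.ext v
    intro j
    by_cases hj : j = i0
    · subst hj
      simp [hfi, gapp, hψ]
    · rw [LinearMap.comp_apply, hf j hj, LinearMap.id_apply, gapp]
      simp only [map_sub, map_smul, hψ, Module.Basis.repr_self, smul_eq_mul, mul_one,
        Finsupp.single_apply, Finsupp.coe_sub, Finsupp.coe_smul, Pi.sub_apply, Pi.smul_apply]
      simp [hj, Ne.symm hj]
  have hfg : f.comp g = LinearMap.id := by
    apply Module.Basis.ext v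
    intro j
    by_cases hj : j = i0
    · subst hj
      have hgi : g (v j) = v j := by rw [gapp, hψ]; simp
      simp [hgi, hfi]
    · have hg : g (v j) = v j + ψ (v j) • v i0 := by
        rw [gapp]
        simp [Module.Basis.repr_self, Finsupp.single_apply, hj, Ne.symm hj]
      rw [LinearMap.comp_apply, hg, LinearMap.id_apply, happ]
      simp only [map_add, map_smul, hψ, Module.Basis.repr_self, smul_eq_mul, mul_one,
        Finsupp.single_apply, Finsupp.coe_add, Finsupp.coe_smul, Pi.add_apply, Pi.smul_apply]
      simp [hj, Ne.symm hj, add_smul]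
  refine ⟨v.map (LinearEquiv.ofLinear f g hfg hgf), ?_, ?_⟩
  · simp [Module.Basis.map_apply, hfi]
  · intro j hj
    simp [Module.Basis.map_apply, hf j hj]

/-- Replace the `i0`-th basis vector by `w`, provided the `i0`-coordinate of `w` is a unit. -/
lemma basis_replace (v : Module.Basis ι Aᵐᵒᵖ V) (i0 : ι) (w : V) (hd : IsUnit (v.repr w i0)) :
    ∃ w' : Module.Basis ι Aᵐᵒᵖ V, w' i0 = w ∧ ∀ j, j ≠ i0 → w' j = v j := by
  classical
  set u : (Aᵐᵒᵖ)ˣ := hd.unit with hu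
  have hud : (↑u : Aᵐᵒᵖ) = v.repr w i0 := hd.unit_spec
  set f : V →ₗ[Aᵐᵒᵖ] V := LinearMap.id + (v.coord i0).smulRight (w - v i0) with hfdef
  set g : V →ₗ[Aᵐᵒᵖ] V :=
    LinearMap.id + (v.coord i0).smulRight ((↑u⁻¹ : Aᵐᵒᵖ) • (v i0 - w)) with hgdef
  have happ : ∀ x : V, f x = x + v.repr x i0 • (w - v i0) := by
    intro x; simp [hfdef, Module.Basis.coord_apply]
  have gapp : ∀ x : V, g x = x + v.repr x i0 • (↑u⁻¹ : Aᵐᵒᵖ) • (v i0 - w) := by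
    intro x; simp [hgdef, Module.Basis.coord_apply]
  have hfj : ∀ j, j ≠ i0 → f (v j) = v j := by
    intro j hj; rw [happ]; simp [Module.Basis.repr_self, Finsupp.single_apply, hj, Ne.symm hj]
  have hgj : ∀ j, j ≠ i0 → g (v j) = v j := by
    intro j hj; rw [gapp]; simp [Module.Basis.repr_self, Finsupp.single_apply, hj, Ne.symm hj]
  have hfi : f (v i0) = w := by
    rw [happ]; simp [Module.Basis.repr_self, Finsupp.single_apply]
  have hgw : g w = v i0 := by
    rw [gapp, smul_smul, ← hud, u.mul_inv, one_smul, add_sub_cancel]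
  have hgi : g (v i0) = v i0 + (↑u⁻¹ : Aᵐᵒᵖ) • (v i0 - w) := by
    rw [gapp]; simp [Module.Basis.repr_self, Finsupp.single_apply]
  have hgf : g.comp f = LinearMap.id := by
    apply Module.Basis.ext v
    intro j
    by_cases hj : j = i0
    · subst hj; rw [LinearMap.comp_apply, hfi, hgw, LinearMap.id_apply]
    · rw [LinearMap.comp_apply, hfj j hj, hgj j hj, LinearMap.id_apply]
  have hfg : f.comp g = LinearMap.id := by
    apply Module.Basis.ext v
    intro j
    by_cases hj : j = i0
    · subst hj
      rw [LinearMap.comp_apply, hgi, LinearMap.id_apply, happ]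
      have hrep : v.repr (v j + (↑u⁻¹ : Aᵐᵒᵖ) • (v j - w)) j = (↑u⁻¹ : Aᵐᵒᵖ) := by
        simp only [map_add, map_smul, map_sub, Module.Basis.repr_self, Finsupp.coe_add,
          Finsupp.coe_smul, Finsupp.coe_sub, Pi.add_apply, Pi.smul_apply, Pi.sub_apply,
          Finsupp.single_eq_same, smul_eq_mul, mul_sub, mul_one, ← hud, u.inv_mul]
        abel
      rw [hrep, add_assoc, ← smul_add, sub_add_sub_cancel, sub_self, smul_zero, add_zero]
    · rw [LinearMap.comp_apply, hgj j hj, hfj j hj, LinearMap.id_apply]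
  refine ⟨v.map (LinearEquiv.ofLinear f g hfg hgf), ?_, ?_⟩
  · simp [Module.Basis.map_apply, hfi]
  · intro j hj
    simp [Module.Basis.map_apply, hfj j hj]

end BasisChange

section Residue
open IsLocalRing Polynomial
variable {R : Type*} [CommRing R] [IsLocalRing R]

lemma residue_ne_zero {r : R} (hr : IsUnit r) : residue R r ≠ 0 := by
  have := hr.map (residue R)
  exact this.ne_zero

lemma unit_of_residue_ne_zero {r : R} (hr : residue R r ≠ 0) : IsUnit r := by
  by_contra hn
  have : r ∈ maximalIdeal R := hn
  rw [← ker_residue, RingHom.mem_ker] at this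
  exact hr this

variable (hsq : ∀ x ∈ maximalIdeal R, ∃ y ∈ maximalIdeal R, (1 + y) ^ 2 = 1 + x)
include hsq

lemma lift_sq {r s : R} (hs : IsUnit s) (hres : residue R r = residue R s) :
    ∃ t : R, IsUnit t ∧ r = s * t ^ 2 := by
  obtain ⟨su, hsu⟩ := hs
  have hr : IsUnit r := unit_of_residue_ne_zero (by rw [hres]; exact residue_ne_zero ⟨su, hsu⟩)
  have hmem : r * ↑su⁻¹ - 1 ∈ maximalIdeal R := by
    rw [← ker_residue, RingHom.mem_ker, map_sub, map_mul, map_one, hres, sub_eq_zero, ← map_mul]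
    rw [← hsu, Units.mul_inv, map_one]
  obtain ⟨y, _, hy⟩ := hsq _ hmem
  have hy' : (1 + y) ^ 2 = r * ↑su⁻¹ := by rw [hy]; ring
  refine ⟨1 + y, ?_, ?_⟩
  · have : IsUnit ((1 + y) * (1 + y)) := by
      rw [← sq, hy']
      exact hr.mul su⁻¹.isUnit
    exact isUnit_of_mul_isUnit_left this
  · rw [← hsu, hy', ← mul_assoc, mul_comm (su : R), mul_assoc, Units.mul_inv, mul_one]

variable [Finite (ResidueField R)] (hodd : Odd (Nat.card (ResidueField R)))
include hodd

omit hsq in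
lemma res_char_ne_two : ringChar (ResidueField R) ≠ 2 := by
  cases nonempty_fintype (ResidueField R)
  intro hc
  have := FiniteField.even_card_of_char_two hc
  rw [Nat.card_eq_fintype_card, Nat.odd_iff] at hodd
  omega

omit hsq in
lemma res_sq_add_sq (a : ResidueField R) : ∃ x y : ResidueField R, x ^ 2 + y ^ 2 = a := by
  cases nonempty_fintype (ResidueField R)
  obtain ⟨x, y, hxy⟩ := FiniteField.exists_root_sum_quadratic
    (f := (X ^ 2 : (ResidueField R)[X])) (g := X ^ 2 - C a) (degree_X_pow 2)
    (degree_X_pow_sub_C (by norm_num) a)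
    (by rw [Nat.card_eq_fintype_card, Nat.odd_iff] at hodd; omega)
  refine ⟨x, y, ?_⟩
  have := hxy
  simp only [eval_pow, eval_X, eval_sub, eval_C] at this
  linear_combination this

variable {ε : R} (hεu : IsUnit ε) (hεnsq : ¬ ∃ u : R, u ^ 2 = ε)
include hεu hεnsq

lemma eps_res_nonsquare : ¬ IsSquare (residue R ε) := by
  rintro ⟨c, hc⟩
  obtain ⟨x, hx⟩ := residue_surjective (R := R) c
  have hx0 : residue R x ≠ 0 := by
    intro h0
    apply residue_ne_zero hεu
    rw [hc, ← hx, h0, mul_zero]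
  have hres : residue R ε = residue R (x ^ 2) := by
    rw [map_pow, hx, hc, sq]
  obtain ⟨t, _, ht⟩ := lift_sq hsq ((unit_of_residue_ne_zero hx0).pow 2) hres
  exact hεnsq ⟨x * t, by rw [mul_pow, ← ht]⟩

lemma res_classify {r : R} (hr : IsUnit r) :
    (∃ t : R, IsUnit t ∧ r = t ^ 2) ∨ (∃ t : R, IsUnit t ∧ r = ε * t ^ 2) := by
  classical
  cases nonempty_fintype (ResidueField R)
  by_cases hsqr : IsSquare (residue R r)
  · left
    obtain ⟨c, hc⟩ := hsqr
    obtain ⟨x, hx⟩ := residue_surjective (R := R) c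
    have hx0 : residue R x ≠ 0 := by
      intro h0
      apply residue_ne_zero hr
      rw [hc, ← hx, h0, mul_zero]
    have hres : residue R r = residue R (x ^ 2) := by rw [map_pow, hx, hc, sq]
    obtain ⟨t, ht, htt⟩ := lift_sq hsq ((unit_of_residue_ne_zero hx0).pow 2) hres
    exact ⟨x * t, ((unit_of_residue_ne_zero hx0).mul ht), by rw [mul_pow, ← htt]⟩
  · right
    -- r̄ ε̄ is a nonzero square
    have hr0 : residue R r ≠ 0 := residue_ne_zero hr
    have hε0 : residue R ε ≠ 0 := residue_ne_zero hεu
    have hsq2 : IsSquare (residue R r * residue R ε) := by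
      have h1 : quadraticChar (ResidueField R) (residue R r) = -1 :=
        (quadraticChar_neg_one_iff_not_isSquare).mpr hsqr
      have h2 : quadraticChar (ResidueField R) (residue R ε) = -1 :=
        (quadraticChar_neg_one_iff_not_isSquare).mpr (eps_res_nonsquare hsq hodd hεu hεnsq)
      have h3 : quadraticChar (ResidueField R) (residue R r * residue R ε) = 1 := by
        rw [map_mul, h1, h2]; ring
      exact (quadraticChar_one_iff_isSquare (mul_ne_zero hr0 hε0)).mp h3
    obtain ⟨c, hc⟩ := hsq2
    -- r̄ = ε̄ * (c ε̄⁻¹)²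
    have hc0 : c ≠ 0 := by
      intro h0; rw [h0, mul_zero] at hc
      exact mul_ne_zero hr0 hε0 hc
    obtain ⟨z, hz⟩ := residue_surjective (R := R) (c * (residue R ε)⁻¹)
    have hz0 : residue R z ≠ 0 := by
      rw [hz]
      exact mul_ne_zero hc0 (inv_ne_zero hε0)
    have hres : residue R r = residue R (ε * z ^ 2) := by
      rw [map_mul, map_pow, hz]
      field_simp
      linear_combination hc
    obtain ⟨t, ht, htt⟩ := lift_sq hsq (hεu.mul ((unit_of_residue_ne_zero hz0).pow 2)) hres
    exact ⟨z * t, (unit_of_residue_ne_zero hz0).mul ht,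
      by rw [htt, mul_pow, mul_assoc]⟩

lemma eps_sum_two_squares :
    ∃ s t : R, IsUnit s ∧ ε * (s ^ 2 + t ^ 2) = 1 := by
  classical
  obtain ⟨x, y, hxy⟩ := res_sq_add_sq (R := R) hodd ((residue R ε)⁻¹)
  have hε0 : residue R ε ≠ 0 := residue_ne_zero hεu
  -- wlog x ≠ 0
  have hne : x ≠ 0 ∨ y ≠ 0 := by
    by_contra hcon
    push_neg at hcon
    rw [hcon.1, hcon.2] at hxy
    simp at hxy
    first
      | exact hε0 hxy
      | exact hε0 hxy.symm
      | exact inv_ne_zero hε0 hxy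
      | exact inv_ne_zero hε0 hxy.symm
  obtain ⟨x, y, hxy, hx0⟩ : ∃ x y : ResidueField R, x ^ 2 + y ^ 2 = (residue R ε)⁻¹ ∧ x ≠ 0 := by
    rcases hne with hx | hy
    · exact ⟨x, y, hxy, hx⟩
    · exact ⟨y, x, by linear_combination hxy, hy⟩
  obtain ⟨s₀, hs₀⟩ := residue_surjective (R := R) x
  obtain ⟨t₀, ht₀⟩ := residue_surjective (R := R) y
  have hd : residue R (ε * (s₀ ^ 2 + t₀ ^ 2)) = residue R 1 := by
    rw [map_one, map_mul, map_add, map_pow, map_pow, hs₀, ht₀, hxy]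
    field_simp
  obtain ⟨τ, hτ, hττ⟩ := lift_sq hsq isUnit_one hd
  rw [one_mul] at hττ
  obtain ⟨τu, hτu⟩ := hτ
  refine ⟨s₀ * ↑τu⁻¹, t₀ * ↑τu⁻¹, ?_, ?_⟩
  · have hs₀u : IsUnit s₀ := unit_of_residue_ne_zero (by rw [hs₀]; exact hx0)
    exact hs₀u.mul τu⁻¹.isUnit
  · calc ε * ((s₀ * ↑τu⁻¹) ^ 2 + (t₀ * ↑τu⁻¹) ^ 2)
        = ε * (s₀ ^ 2 + t₀ ^ 2) * (↑τu⁻¹ : R) ^ 2 := by ring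
      _ = τ ^ 2 * (↑τu⁻¹ : R) ^ 2 := by rw [hττ]
      _ = 1 := by rw [← mul_pow, ← hτu, Units.mul_inv, one_pow]

end Residue

section MainHelpers

open MulOpposite

lemma loc_sum {A : Type*} [Ring A] [IsLocalRing A] {ι : Type*} (s : Finset ι) (f : ι → A)
    (hf : ∀ i ∈ s, ¬IsUnit (f i)) : ¬IsUnit (∑ i ∈ s, f i) :=
  Finset.sum_induction f (fun a => ¬IsUnit a) (fun _ _ => loc_add) not_isUnit_zero hf

lemma unit_mul_cancel {A : Type*} [Ring A] {a x : A} (ha : IsUnit a) (h : a * x = 0) : x = 0 := by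
  obtain ⟨w, hw⟩ := ha
  calc x = ↑w⁻¹ * (a * x) := by rw [← hw, ← mul_assoc, Units.inv_mul, one_mul]
    _ = 0 := by rw [h, mul_zero]

variable {A : Type*} [Ring A] [StarRing A] {R : Type*} [CommRing R] [Algebra R A]

lemma alg_star (hfix : ∀ a : A, star a = a ↔ a ∈ Set.range (algebraMap R A))
    (r : R) : star (algebraMap R A r) = algebraMap R A r := (hfix _).mpr ⟨r, rfl⟩

lemma alg_comm (hcent : ∀ a : A, star a = a → a ∈ Set.center A)
    (hfix : ∀ a : A, star a = a ↔ a ∈ Set.range (algebraMap R A))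
    (r : R) (x : A) : algebraMap R A r * x = x * algebraMap R A r :=
  (Semigroup.mem_center_iff.mp (hcent _ (alg_star hfix r)) x).symm

lemma unit_descend (hinj : Function.Injective (algebraMap R A))
    (hfix : ∀ a : A, star a = a ↔ a ∈ Set.range (algebraMap R A))
    {r : R} (h : IsUnit (algebraMap R A r)) : IsUnit r := by
  obtain ⟨u, hu⟩ := h
  have ha : star (algebraMap R A r) = algebraMap R A r := alg_star hfix r
  have hR : algebraMap R A r * star (↑u⁻¹ : A) = 1 := by
    have h0 : star ((↑u⁻¹ : A) * algebraMap R A r) = 1 := by rw [← hu, u.inv_mul, star_one]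
    rwa [star_mul, ha] at h0
  have hstar : star (↑u⁻¹ : A) = ↑u⁻¹ := by
    calc star (↑u⁻¹ : A) = (↑u⁻¹ * algebraMap R A r) * star ↑u⁻¹ := by
          rw [← hu, u.inv_mul, one_mul]
      _ = ↑u⁻¹ * (algebraMap R A r * star ↑u⁻¹) := by rw [mul_assoc]
      _ = ↑u⁻¹ := by rw [hR, mul_one]
  obtain ⟨r', hr'⟩ := (hfix _).mp hstar
  have heq : algebraMap R A (r * r') = algebraMap R A 1 := by
    rw [map_one, map_mul, hr', ← hu, u.mul_inv]
  exact IsUnit.of_mul_eq_one r' (hinj heq)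

variable {V : Type*} [AddCommGroup V] [Module Aᵐᵒᵖ V]

lemma diag_in_R (hfix : ∀ a : A, star a = a ↔ a ∈ Set.range (algebraMap R A))
    (h : HermitianForm A V) (u : V) : ∃ r : R, h.toFun u u = algebraMap R A r := by
  have hs : star (h.toFun u u) = h.toFun u u := (h.conj_symm u u).symm
  obtain ⟨r, hr⟩ := (hfix _).mp hs
  exact ⟨r, hr.symm⟩

/-- The `i`-th coordinate functional with values in `A`. -/
noncomputable def coordA {ι : Type*} (v : Module.Basis ι Aᵐᵒᵖ V) (i : ι) : V →ₗ[Aᵐᵒᵖ] A where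
  toFun x := unop (v.repr x i)
  map_add' x y := by simp
  map_smul' c x := by
    simp only [map_smul, Finsupp.smul_apply, smul_eq_mul, unop_mul, RingHom.id_apply,
      MulOpposite.smul_eq_mul_unop]

lemma pair_expand {ι : Type*} [Fintype ι] (h : HermitianForm A V) (v : Module.Basis ι Aᵐᵒᵖ V)
    (u x : V) : h.toFun u x = ∑ j, h.toFun u (v j) * unop (v.repr x j) := by
  calc h.toFun u x = h.lin u (∑ j, v.repr x j • v j) := by
        rw [v.sum_repr, HermitianForm.lin_apply]
    _ = ∑ j, h.lin u (v.repr x j • v j) := map_sum (h.lin u) _ _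
    _ = ∑ j, h.toFun u (v j) * unop (v.repr x j) := by
        refine Finset.sum_congr rfl fun j _ => ?_
        rw [HermitianForm.lin_apply, h.smul_right']

end MainHelpers

section OrthBasis

open MulOpposite

variable {A V : Type*} [Ring A] [StarRing A] [IsLocalRing A]
  [AddCommGroup V] [Module Aᵐᵒᵖ V]
  {R : Type*} [CommRing R] [IsLocalRing R] [Algebra R A]

lemma pair_expand_left {ι : Type*} [Fintype ι] (h : HermitianForm A V) (v : Module.Basis ι Aᵐᵒᵖ V)
    (u x : V) : h.toFun x u = ∑ j, star (unop (v.repr x j)) * h.toFun (v j) u := by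
  rw [h.conj_symm, pair_expand h v u x, star_sum]
  refine Finset.sum_congr rfl fun j _ => ?_
  rw [star_mul, ← h.conj_symm]

lemma orth_basis
    (hcent : ∀ a : A, star a = a → a ∈ Set.center A)
    (h2 : IsUnit (2 : A))
    (hinj : Function.Injective (algebraMap R A))
    (hfix : ∀ a : A, star a = a ↔ a ∈ Set.range (algebraMap R A))
    (m : ℕ) (b : Module.Basis (Fin m) Aᵐᵒᵖ V)
    (h : HermitianForm A V) (hnd : h.Nondeg) :
    ∃ v : Module.Basis (Fin m) Aᵐᵒᵖ V,
      (∀ i j : Fin m, i ≠ j → h.toFun (v i) (v j) = 0) ∧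
      (∀ i : Fin m, ∃ r : R, IsUnit r ∧ h.toFun (v i) (v i) = algebraMap R A r) := by
  classical
  suffices key : ∀ k : ℕ, k ≤ m → ∃ v : Module.Basis (Fin m) Aᵐᵒᵖ V,
      (∀ i j : Fin m, (i : ℕ) < k → i ≠ j → h.toFun (v i) (v j) = 0) ∧
      (∀ i : Fin m, (i : ℕ) < k → ∃ r : R, IsUnit r ∧ h.toFun (v i) (v i) = algebraMap R A r) by
    obtain ⟨v, h1, h2⟩ := key m le_rfl
    exact ⟨v, fun i j => h1 i j i.isLt, fun i => h2 i i.isLt⟩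
  intro k
  induction k with
  | zero => exact fun _ => ⟨b, fun i j hik => absurd hik (by omega), fun i hik => absurd hik (by omega)⟩
  | succ k ih =>
    intro hk1
    obtain ⟨v, hor, hdiag⟩ := ih (by omega)
    set kk : Fin m := ⟨k, by omega⟩ with hkk
    -- orthogonality of early basis vectors to vectors with vanishing early coordinates
    have horthx : ∀ x : V, (∀ i : Fin m, (i : ℕ) < k → v.repr x i = 0) →
        ∀ i : Fin m, (i : ℕ) < k → h.toFun (v i) x = 0 ∧ h.toFun x (v i) = 0 := by
      intro x hx i hi
      have h1 : h.toFun (v i) x = 0 := by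
        rw [pair_expand h v (v i) x]
        apply Finset.sum_eq_zero
        intro j _
        by_cases hji : j = i
        · rw [hji, hx i hi]; simp
        · rw [hor i j hi (fun e => hji e.symm), zero_mul]
      exact ⟨h1, by rw [h.conj_symm, h1, star_zero]⟩
    -- a vector pairing to 1 with v kk and 0 with the others
    obtain ⟨u, hu, -⟩ := hnd (coordA v kk)
    have hu1 : h.toFun u (v kk) = 1 := by
      rw [hu]; simp [coordA, Module.Basis.repr_self]
    have huj : ∀ j : Fin m, j ≠ kk → h.toFun u (v j) = 0 := by
      intro j hj
      rw [hu]
      simp [coordA, Module.Basis.repr_self, Finsupp.single_apply, hj]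
    have hucoef : ∀ i : Fin m, (i : ℕ) < k → v.repr u i = 0 := by
      intro i hi
      have hiv : h.toFun (v i) u = 0 := by
        rw [h.conj_symm, huj i (by intro e; rw [e] at hi; simp [hkk] at hi), star_zero]
      obtain ⟨r, hrunit, hrval⟩ := hdiag i hi
      have hexp : h.toFun (v i) u = algebraMap R A r * unop (v.repr u i) := by
        rw [pair_expand h v (v i) u, Finset.sum_eq_single i]
        · rw [hrval]
        · intro j _ hj; rw [hor i j hi (fun e => hj e.symm), zero_mul]
        · intro hmem; exact absurd (Finset.mem_univ i) hmem
      have h0 : algebraMap R A r * unop (v.repr u i) = 0 := by rw [← hexp, hiv]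
      exact unop_injective (unit_mul_cancel (hrunit.map (algebraMap R A)) h0)
    have hvkcoef : ∀ i : Fin m, (i : ℕ) < k → v.repr (v kk) i = 0 := by
      intro i hi
      rw [Module.Basis.repr_self]
      exact Finsupp.single_eq_of_ne (by intro e; rw [e] at hi; simp [hkk] at hi)
    -- find a vector with vanishing early coordinates and unit length
    obtain ⟨w, hwcoef, hwunit⟩ : ∃ w : V,
        (∀ i : Fin m, (i : ℕ) < k → v.repr w i = 0) ∧ IsUnit (h.toFun w w) := by
      by_cases c1 : IsUnit (h.toFun u u)
      · exact ⟨u, hucoef, c1⟩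
      by_cases c2 : IsUnit (h.toFun (v kk) (v kk))
      · exact ⟨v kk, hvkcoef, c2⟩
      refine ⟨u + v kk, ?_, ?_⟩
      · intro i hi
        rw [map_add, Finsupp.add_apply, hucoef i hi, hvkcoef i hi, add_zero]
      · have hvku : h.toFun (v kk) u = 1 := by
          rw [h.conj_symm u (v kk), hu1, star_one]
        have hexpand : h.toFun (u + v kk) (u + v kk)
            = h.toFun u u + h.toFun (v kk) (v kk) + 2 := by
          rw [h.add_left, h.add_right, h.add_right, hu1, hvku, ← one_add_one_eq_two]
          abel
        by_contra c3
        have h2' : h.toFun (u + v kk) (u + v kk) + -(h.toFun u u) + -(h.toFun (v kk) (v kk))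
            = 2 := by rw [hexpand]; abel
        exact (loc_add (loc_add c3 (fun hn => c1 ((IsUnit.neg_iff _).mp hn)))
          (fun hn => c2 ((IsUnit.neg_iff _).mp hn))) (h2' ▸ h2)
    -- some coordinate of w is a unit, necessarily at index ≥ k
    obtain ⟨j0, hj0unit⟩ : ∃ j0 : Fin m, IsUnit (v.repr w j0) := by
      by_contra hall
      push_neg at hall
      refine (?_ : ¬IsUnit (h.toFun w w)) hwunit
      rw [pair_expand h v w w]
      apply loc_sum
      intro j _
      exact loc_mul_left (fun hn => hall j (isUnit_unop.mp hn)) _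
    have hj0k : ¬((j0 : ℕ) < k) := by
      intro hlt
      rw [hwcoef j0 hlt] at hj0unit
      exact not_isUnit_zero hj0unit
    -- replace v j0 by w, then swap it into position kk
    obtain ⟨v1, hv1j0, hv1other⟩ := basis_replace v j0 w hj0unit
    set σ : Equiv.Perm (Fin m) := Equiv.swap j0 kk with hσ
    set v2 : Module.Basis (Fin m) Aᵐᵒᵖ V := v1.reindex σ with hv2def
    have hv2app : ∀ j, v2 j = v1 (σ j) := by
      intro j
      rw [hv2def, Module.Basis.reindex_apply, hσ, Equiv.symm_swap]
    have hv2kk : v2 kk = w := by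
      rw [hv2app, hσ, Equiv.swap_apply_right, hv1j0]
    have hv2early : ∀ i : Fin m, (i : ℕ) < k → v2 i = v i := by
      intro i hi
      have hne1 : i ≠ j0 := fun e => hj0k (e ▸ hi)
      have hne2 : i ≠ kk := by intro e; rw [e] at hi; simp [hkk] at hi
      rw [hv2app, hσ, Equiv.swap_apply_of_ne_of_ne hne1 hne2, hv1other i hne1]
    -- every v2 j is either w or some v l
    have hv2cases : ∀ j : Fin m, v2 j = w ∨ ∃ l : Fin m, (l = j ∨ l = kk ∨ l = j0) ∧ v2 j = v l := by
      intro j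
      by_cases e : σ j = j0
      · left; rw [hv2app, e, hv1j0]
      · right
        refine ⟨σ j, ?_, by rw [hv2app, hv1other _ e]⟩
        by_cases e2 : j = j0
        · right; left; rw [e2, hσ, Equiv.swap_apply_left]
        by_cases e3 : j = kk
        · exact absurd (by rw [e3, hσ, Equiv.swap_apply_right]) e
        · left; rw [hσ, Equiv.swap_apply_of_ne_of_ne e2 e3]
    -- pairing of early vectors with new basis vectors
    have hv2pair : ∀ i : Fin m, (i : ℕ) < k → ∀ j : Fin m, j ≠ i → h.toFun (v i) (v2 j) = 0 := by
      intro i hi j hj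
      rcases hv2cases j with hc | ⟨l, hl, hc⟩
      · rw [hc]; exact (horthx w hwcoef i hi).1
      · rw [hc]
        refine hor i l hi ?_
        rcases hl with rfl | rfl | rfl
        · exact fun e => hj e.symm
        · intro e; rw [e] at hi; simp [hkk] at hi
        · exact fun e => hj0k (e ▸ hi)
    -- the length of w, and its inverse
    have hcu := hwunit
    set c : A := h.toFun w w with hcdef
    obtain ⟨cu, hcuval⟩ := hcu
    -- shear: make all other basis vectors orthogonal to w
    set ψ : V →ₗ[Aᵐᵒᵖ] Aᵐᵒᵖ :=
      { toFun := fun x => op (↑cu⁻¹ * h.toFun w x)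
        map_add' := by
          intro x y
          simp only [h.add_right, mul_add, op_add]
        map_smul' := by
          intro c' x
          simp only [h.smul_right', RingHom.id_apply]
          rw [← mul_assoc]
          calc op (↑cu⁻¹ * h.toFun w x * unop c')
              = op (unop c') * op (↑cu⁻¹ * h.toFun w x) := by rw [← op_mul]
            _ = c' • op (↑cu⁻¹ * h.toFun w x) := by rw [op_unop, smul_eq_mul] } with hψdef
    have hψval : ∀ x, ψ x = op (↑cu⁻¹ * h.toFun w x) := fun _ => rfl
    have hψw : ψ (v2 kk) = 1 := by
      rw [hψval, hv2kk, ← hcdef, ← hcuval, cu.inv_mul, op_one]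
    obtain ⟨v3, hv3kk, hv3other⟩ := basis_shear v2 kk ψ hψw
    have hv3kk' : v3 kk = w := by rw [hv3kk, hv2kk]
    -- early vectors are unchanged
    have hv3early : ∀ i : Fin m, (i : ℕ) < k → v3 i = v i := by
      intro i hi
      have hne2 : i ≠ kk := by intro e; rw [e] at hi; simp [hkk] at hi
      rw [hv3other i hne2, hv2early i hi, hv2kk]
      have hwvi : h.toFun w (v i) = 0 := (horthx w hwcoef i hi).2
      rw [hψval, hwvi, mul_zero, op_zero, zero_smul, sub_zero]
    -- w is orthogonal to all the other new basis vectors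
    have hwv3 : ∀ j : Fin m, j ≠ kk → h.toFun w (v3 j) = 0 := by
      intro j hj
      rw [hv3other j hj, hv2kk, h.sub_right, h.smul_right']
      have : unop (ψ (v2 j)) = ↑cu⁻¹ * h.toFun w (v2 j) := by rw [hψval, unop_op]
      rw [this, ← hcdef, ← mul_assoc, ← hcuval, cu.mul_inv, one_mul, sub_self]
    refine ⟨v3, ?_, ?_⟩
    · intro i j hik hij
      rcases Nat.lt_succ_iff_lt_or_eq.mp hik with hik' | hik'
      · -- i < k
        rw [hv3early i hik']
        by_cases hjkk : j = kk
        · rw [hjkk, hv3kk']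
          exact (horthx w hwcoef i hik').1
        · rw [hv3other j hjkk, hv2kk, h.sub_right, h.smul_right',
            hv2pair i hik' j (fun e => hij e.symm),
            (horthx w hwcoef i hik').1, zero_mul, sub_zero]
      · -- i = kk
        have hikk : i = kk := Fin.ext hik'
        rw [hikk, hv3kk']
        exact hwv3 j (by rw [← hikk]; exact fun e => hij e.symm)
    · intro i hik
      rcases Nat.lt_succ_iff_lt_or_eq.mp hik with hik' | hik'
      · rw [hv3early i hik']
        exact hdiag i hik'
      · have hikk : i = kk := Fin.ext hik'
        rw [hikk, hv3kk']
        obtain ⟨r, hr⟩ := diag_in_R hfix h w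
        refine ⟨r, unit_descend hinj hfix ?_, hr⟩
        rw [← hr]
        exact hwunit

end OrthBasis

section PostProcess

open MulOpposite

variable {A V : Type*} [Ring A] [StarRing A] [IsLocalRing A]
  [AddCommGroup V] [Module Aᵐᵒᵖ V]
  {R : Type*} [CommRing R] [IsLocalRing R] [Algebra R A]

lemma alg_mul_mul (hcent : ∀ a : A, star a = a → a ∈ Set.center A)
    (hfix : ∀ a : A, star a = a ↔ a ∈ Set.range (algebraMap R A))
    (a b : R) (z : A) :
    algebraMap R A a * (z * algebraMap R A b) = algebraMap R A (a * b) * z := by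
  rw [← alg_comm hcent hfix b z, ← mul_assoc, ← map_mul]

lemma herm_smul_smul (hcent : ∀ a : A, star a = a → a ∈ Set.center A)
    (hfix : ∀ a : A, star a = a ↔ a ∈ Set.range (algebraMap R A))
    (h : HermitianForm A V) (a b : R) (x y : V) :
    h.toFun (op (algebraMap R A a) • x) (op (algebraMap R A b) • y)
      = algebraMap R A (a * b) * h.toFun x y := by
  rw [h.smul_left, h.smul_right, alg_star hfix, alg_mul_mul hcent hfix]

lemma herm_comb_left (hcent : ∀ a : A, star a = a → a ∈ Set.center A)
    (hfix : ∀ a : A, star a = a ↔ a ∈ Set.range (algebraMap R A))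
    (h : HermitianForm A V) (a b : R) (x y z : V) :
    h.toFun (op (algebraMap R A a) • x + op (algebraMap R A b) • y) z
      = algebraMap R A a * h.toFun x z + algebraMap R A b * h.toFun y z := by
  rw [h.add_left, h.smul_left, h.smul_left, alg_star hfix, alg_star hfix]

lemma herm_comb_right (hcent : ∀ a : A, star a = a → a ∈ Set.center A)
    (hfix : ∀ a : A, star a = a ↔ a ∈ Set.range (algebraMap R A))
    (h : HermitianForm A V) (a b : R) (x y z : V) :
    h.toFun z (op (algebraMap R A a) • x + op (algebraMap R A b) • y)
      = algebraMap R A a * h.toFun z x + algebraMap R A b * h.toFun z y := by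
  rw [h.add_right, h.smul_right, h.smul_right]
  rw [← alg_comm hcent hfix a (h.toFun z x), ← alg_comm hcent hfix b (h.toFun z y)]

lemma herm_comb (hcent : ∀ a : A, star a = a → a ∈ Set.center A)
    (hfix : ∀ a : A, star a = a ↔ a ∈ Set.range (algebraMap R A))
    (h : HermitianForm A V) (a b a' b' : R) (x y : V) :
    h.toFun (op (algebraMap R A a) • x + op (algebraMap R A b) • y)
      (op (algebraMap R A a') • x + op (algebraMap R A b') • y)
      = algebraMap R A (a * a') * h.toFun x x + algebraMap R A (a * b') * h.toFun x y
        + (algebraMap R A (b * a') * h.toFun y x + algebraMap R A (b * b') * h.toFun y y) := by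
  rw [h.add_right, herm_comb_left hcent hfix, herm_comb_left hcent hfix]
  simp only [h.smul_right, alg_mul_mul hcent hfix]
  abel

/-- Rescale an orthogonal basis by units of `R`. -/
lemma basis_rescale (hcent : ∀ a : A, star a = a → a ∈ Set.center A)
    (hfix : ∀ a : A, star a = a ↔ a ∈ Set.range (algebraMap R A))
    {m : ℕ} (h : HermitianForm A V) (v : Module.Basis (Fin m) Aᵐᵒᵖ V)
    (s : Fin m → R) (hs : ∀ i, IsUnit (s i)) :
    ∃ v' : Module.Basis (Fin m) Aᵐᵒᵖ V, ∀ i j,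
      h.toFun (v' i) (v' j) = algebraMap R A (s i * s j) * h.toFun (v i) (v j) := by
  have hop : ∀ i, IsUnit (op (algebraMap R A (s i))) :=
    fun i => ((hs i).map (algebraMap R A)).op
  refine ⟨v.unitsSMul (fun i => (hop i).unit), ?_⟩
  intro i j
  rw [Module.Basis.unitsSMul_apply, Module.Basis.unitsSMul_apply, Units.smul_def, Units.smul_def,
    IsUnit.unit_spec, IsUnit.unit_spec]
  exact herm_smul_smul hcent hfix h (s i) (s j) (v i) (v j)

/-- Combine two basis vectors by a rotation-like change of basis. -/
lemma eps_pair {m : ℕ} (h : HermitianForm A V) (v : Module.Basis (Fin m) Aᵐᵒᵖ V)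
    (i j : Fin m) (hij : i ≠ j) (s t : R) (hs : IsUnit s) (hst : IsUnit (s * s + t * t)) :
    ∃ v' : Module.Basis (Fin m) Aᵐᵒᵖ V,
      v' i = op (algebraMap R A s) • v i + op (algebraMap R A t) • v j ∧
      v' j = op (algebraMap R A (-t)) • v i + op (algebraMap R A s) • v j ∧
      ∀ l, l ≠ i → l ≠ j → v' l = v l := by
  classical
  set wi : V := op (algebraMap R A s) • v i + op (algebraMap R A t) • v j with hwi
  set wj : V := op (algebraMap R A (-t)) • v i + op (algebraMap R A s) • v j with hwj
  have hrepr1 : v.repr wi i = op (algebraMap R A s) := by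
    rw [hwi, map_add, map_smul, map_smul, Module.Basis.repr_self, Module.Basis.repr_self]
    simp [Finsupp.single_apply, hij, Ne.symm hij, smul_eq_mul]
  obtain ⟨v1, hv1i, hv1other⟩ := basis_replace v i wi
    (by rw [hrepr1]; exact ((hs.map (algebraMap R A))).op)
  set s' : R := ↑hs.unit⁻¹ with hs'
  have hs'u : IsUnit s' := hs.unit⁻¹.isUnit
  have hss' : s * s' = 1 := by
    rw [hs']
    exact hs.mul_val_inv
  -- v i expressed in the new basis
  have hvi1 : v i = op (algebraMap R A s') • v1 i - op (algebraMap R A (t * s')) • v1 j := by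
    rw [hv1i, hv1other j (Ne.symm hij), hwi, smul_add, smul_smul, smul_smul,
      ← op_mul, ← op_mul, ← map_mul, ← map_mul, hss', map_one, op_one, one_smul]
    abel
  -- wj expressed in the new basis
  have hwj1 : wj = op (algebraMap R A (s' * (-t))) • v1 i
      + op (algebraMap R A (t * s' * t + s)) • v1 j := by
    rw [hwj, hvi1, hv1other j (Ne.symm hij)]
    rw [smul_sub, smul_smul, smul_smul, ← op_mul, ← op_mul, ← map_mul, ← map_mul]
    have e : t * s' * t + s = -(t * s' * -t) + s := by ring
    rw [e, map_add, op_add, add_smul, map_neg, op_neg, neg_smul]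
    abel
  have hrepr2 : v1.repr wj j = op (algebraMap R A (t * s' * t + s)) := by
    rw [hwj1, map_add, map_smul, map_smul, Module.Basis.repr_self, Module.Basis.repr_self]
    simp [Finsupp.single_apply, hij, Ne.symm hij, smul_eq_mul]
  have hunit2 : IsUnit (t * s' * t + s) := by
    have e : t * s' * t + s = s' * (s * s + t * t) := by
      have : s' * (s * s) = s := by
        calc s' * (s * s) = (s * s') * s := by ring
          _ = s := by rw [hss', one_mul]
      calc t * s' * t + s = s' * (t * t) + s' * (s * s) := by rw [this]; ring
        _ = s' * (s * s + t * t) := by ring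
    rw [e]
    exact hs'u.mul hst
  obtain ⟨v2, hv2j, hv2other⟩ := basis_replace v1 j wj
    (by rw [hrepr2]; exact ((hunit2.map (algebraMap R A))).op)
  refine ⟨v2, ?_, ?_, ?_⟩
  · rw [hv2other i hij, hv1i, hwi]
  · rw [hv2j, hwj]
  · intro l hli hlj
    rw [hv2other l hlj, hv1other l hli]

end PostProcess


/-- Theorem 3.6: `V` has an orthogonal basis with all lengths `1` except possibly
the last; the last length is `1` when the norm map `Q : A* → R*` is surjective,
and lies in `{1, ε}` when `Q(A*) = R*²`. -/
theorem stmt_10 {A V : Type*} [Ring A] [StarRing A] [IsLocalRing A]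
    [AddCommGroup V] [Module Aᵐᵒᵖ V]
    (hcent : ∀ a : A, star a = a → a ∈ Set.center A)
    (h2 : IsUnit (2 : A))
    (R : Type*) [CommRing R] [IsLocalRing R] [Algebra R A]
    (hinj : Function.Injective (algebraMap R A))
    (hfix : ∀ a : A, star a = a ↔ a ∈ Set.range (algebraMap R A))
    [Finite (IsLocalRing.ResidueField R)]
    (hodd : Odd (Nat.card (IsLocalRing.ResidueField R)))
    (hsq : ∀ x ∈ IsLocalRing.maximalIdeal R,
      ∃ y ∈ IsLocalRing.maximalIdeal R, (1 + y) ^ 2 = 1 + x)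
    (ε : R) (hεu : IsUnit ε) (hεnsq : ¬ ∃ u : R, u ^ 2 = ε)
    (m : ℕ) (hm : 1 ≤ m) (b : Module.Basis (Fin m) Aᵐᵒᵖ V)
    (h : HermitianForm A V) (hnd : h.Nondeg) :
    ∃ v : Module.Basis (Fin m) Aᵐᵒᵖ V,
      (∀ i j : Fin m, i ≠ j → h.toFun (v i) (v j) = 0) ∧
      (∀ i : Fin m, (i : ℕ) < m - 1 → h.toFun (v i) (v i) = 1) ∧
      ((∀ r : R, IsUnit r → ∃ a : A, IsUnit a ∧ a * star a = algebraMap R A r) →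
        h.toFun (v ⟨m - 1, by omega⟩) (v ⟨m - 1, by omega⟩) = 1) ∧
      ((∀ a : A, IsUnit a → ∃ u : R, IsUnit u ∧ a * star a = algebraMap R A (u ^ 2)) →
        (h.toFun (v ⟨m - 1, by omega⟩) (v ⟨m - 1, by omega⟩) = 1 ∨
         h.toFun (v ⟨m - 1, by omega⟩) (v ⟨m - 1, by omega⟩) = algebraMap R A ε)) := by

  classical
  obtain ⟨v0, hor0, hdiag0⟩ := orth_basis hcent h2 hinj hfix m b h hnd
  -- normalize lengths modulo squares
  have key : ∀ i : Fin m, ∃ s : R, IsUnit s ∧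
      (algebraMap R A (s * s) * h.toFun (v0 i) (v0 i) = 1 ∨
       algebraMap R A (s * s) * h.toFun (v0 i) (v0 i) = algebraMap R A ε) := by
    intro i
    obtain ⟨r, hru, hrv⟩ := hdiag0 i
    rcases res_classify hsq hodd hεu hεnsq hru with ⟨t, ht, htr⟩ | ⟨t, ht, htr⟩
    · refine ⟨↑ht.unit⁻¹, ht.unit⁻¹.isUnit, Or.inl ?_⟩
      rw [hrv, htr, ← map_mul]
      have e : (↑ht.unit⁻¹ : R) * ↑ht.unit⁻¹ * t ^ 2 = 1 := by
        have e2 : (↑ht.unit⁻¹ : R) * ↑ht.unit⁻¹ * t ^ 2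
            = (↑ht.unit⁻¹ * t) * (↑ht.unit⁻¹ * t) := by ring
        rw [e2, ht.val_inv_mul, one_mul]
      rw [e, map_one]
    · refine ⟨↑ht.unit⁻¹, ht.unit⁻¹.isUnit, Or.inr ?_⟩
      rw [hrv, htr, ← map_mul]
      have e : (↑ht.unit⁻¹ : R) * ↑ht.unit⁻¹ * (ε * t ^ 2) = ε := by
        have e2 : (↑ht.unit⁻¹ : R) * ↑ht.unit⁻¹ * (ε * t ^ 2)
            = ε * ((↑ht.unit⁻¹ * t) * (↑ht.unit⁻¹ * t)) := by ring
        rw [e2, ht.val_inv_mul, one_mul, mul_one]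
      rw [e]
  choose sc hscu hscval using key
  obtain ⟨v1, hv1⟩ := basis_rescale hcent hfix h v0 sc hscu
  have hor1 : ∀ i j : Fin m, i ≠ j → h.toFun (v1 i) (v1 j) = 0 := by
    intro i j hij; rw [hv1, hor0 i j hij, mul_zero]
  have hent1 : ∀ i, h.toFun (v1 i) (v1 i) = 1 ∨
      h.toFun (v1 i) (v1 i) = algebraMap R A ε := by
    intro i; rw [hv1]; exact hscval i
  have hεA1 : algebraMap R A ε ≠ 1 := by
    intro e
    have he1 : ε = 1 := hinj (by rw [e, map_one])
    exact hεnsq ⟨1, by rw [one_pow, he1]⟩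
  -- reduce the number of ε's to at most one
  have main : ∀ n : ℕ, ∀ w : Module.Basis (Fin m) Aᵐᵒᵖ V,
      ((∀ i j : Fin m, i ≠ j → h.toFun (w i) (w j) = 0) ∧
       (∀ i, h.toFun (w i) (w i) = 1 ∨ h.toFun (w i) (w i) = algebraMap R A ε)) →
      (Finset.univ.filter (fun i => h.toFun (w i) (w i) = algebraMap R A ε)).card ≤ n →
      ∃ w' : Module.Basis (Fin m) Aᵐᵒᵖ V,
        ((∀ i j : Fin m, i ≠ j → h.toFun (w' i) (w' j) = 0) ∧
         (∀ i, h.toFun (w' i) (w' i) = 1 ∨ h.toFun (w' i) (w' i) = algebraMap R A ε)) ∧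
        (Finset.univ.filter (fun i => h.toFun (w' i) (w' i) = algebraMap R A ε)).card ≤ 1 := by
    intro n
    induction n with
    | zero => exact fun w hw hc => ⟨w, hw, by omega⟩
    | succ n ihn =>
      intro w hw hc
      by_cases hle :
        (Finset.univ.filter (fun i => h.toFun (w i) (w i) = algebraMap R A ε)).card ≤ 1
      · exact ⟨w, hw, hle⟩
      obtain ⟨i, hi, j, hj, hij⟩ := Finset.one_lt_card.mp
        (show 1 < (Finset.univ.filter
          (fun i => h.toFun (w i) (w i) = algebraMap R A ε)).card by omega)
      have hεi : h.toFun (w i) (w i) = algebraMap R A ε := (Finset.mem_filter.mp hi).2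
      have hεj : h.toFun (w j) (w j) = algebraMap R A ε := (Finset.mem_filter.mp hj).2
      obtain ⟨s, t, hsu, hst1⟩ := eps_sum_two_squares hsq hodd hεu hεnsq
      have hstu : IsUnit (s * s + t * t) := by
        refine IsUnit.of_mul_eq_one ε ?_
        rw [mul_comm, ← hst1]
        ring
      obtain ⟨w2, hw2i, hw2j, hw2other⟩ := eps_pair h w i j hij s t hsu hstu
      have hvii : h.toFun (w2 i) (w2 i) = 1 := by
        rw [hw2i, herm_comb hcent hfix, hεi, hw.1 i j hij, hw.1 j i (Ne.symm hij), hεj,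
          mul_zero, mul_zero, add_zero, zero_add, ← map_mul, ← map_mul, ← map_add]
        rw [show s * s * ε + t * t * ε = 1 from by rw [← hst1]; ring, map_one]
      have hvjj : h.toFun (w2 j) (w2 j) = 1 := by
        rw [hw2j, herm_comb hcent hfix, hεi, hw.1 i j hij, hw.1 j i (Ne.symm hij), hεj,
          mul_zero, mul_zero, add_zero, zero_add, ← map_mul, ← map_mul, ← map_add]
        rw [show -t * -t * ε + s * s * ε = 1 from by rw [← hst1]; ring, map_one]
      have hvij : h.toFun (w2 i) (w2 j) = 0 := by
        rw [hw2i, hw2j, herm_comb hcent hfix, hεi, hw.1 i j hij, hw.1 j i (Ne.symm hij), hεj,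
          mul_zero, mul_zero, add_zero, zero_add, ← map_mul, ← map_mul, ← map_add]
        rw [show s * -t * ε + t * s * ε = 0 from by ring, map_zero]
      have hvji : h.toFun (w2 j) (w2 i) = 0 := by
        rw [h.conj_symm, hvij, star_zero]
      have horth2 : ∀ p q : Fin m, p ≠ q → h.toFun (w2 p) (w2 q) = 0 := by
        intro p q hpq
        by_cases hpi : p = i
        · by_cases hqj : q = j
          · rw [hpi, hqj]; exact hvij
          · have hqi : q ≠ i := fun e => hpq (by rw [hpi, e])
            rw [hpi, hw2i, hw2other q hqi hqj, herm_comb_left hcent hfix,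
              hw.1 i q (fun e => hqi e.symm), hw.1 j q (fun e => hqj e.symm),
              mul_zero, mul_zero, add_zero]
        by_cases hpj : p = j
        · by_cases hqi : q = i
          · rw [hpj, hqi]; exact hvji
          · have hqj : q ≠ j := fun e => hpq (by rw [hpj, e])
            rw [hpj, hw2j, hw2other q hqi hqj, herm_comb_left hcent hfix,
              hw.1 i q (fun e => hqi e.symm), hw.1 j q (fun e => hqj e.symm),
              mul_zero, mul_zero, add_zero]
        · by_cases hqi : q = i
          · rw [hqi, hw2other p hpi hpj, hw2i, herm_comb_right hcent hfix,
              hw.1 p i hpi, hw.1 p j hpj, mul_zero, mul_zero, add_zero]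
          by_cases hqj : q = j
          · rw [hqj, hw2other p hpi hpj, hw2j, herm_comb_right hcent hfix,
              hw.1 p i hpi, hw.1 p j hpj, mul_zero, mul_zero, add_zero]
          · rw [hw2other p hpi hpj, hw2other q hqi hqj]
            exact hw.1 p q hpq
      have hent2 : ∀ l, h.toFun (w2 l) (w2 l) = 1 ∨
          h.toFun (w2 l) (w2 l) = algebraMap R A ε := by
        intro l
        by_cases hli : l = i
        · rw [hli]; exact Or.inl hvii
        by_cases hlj : l = j
        · rw [hlj]; exact Or.inl hvjj
        · rw [hw2other l hli hlj]; exact hw.2 l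
      refine ihn w2 ⟨horth2, hent2⟩ ?_
      have hsub : Finset.univ.filter (fun l => h.toFun (w2 l) (w2 l) = algebraMap R A ε)
          ⊆ (Finset.univ.filter (fun l => h.toFun (w l) (w l) = algebraMap R A ε)).erase i := by
        intro l hl
        have hl2 := (Finset.mem_filter.mp hl).2
        have hlnei : l ≠ i := by
          intro e; rw [e, hvii] at hl2; exact hεA1 hl2.symm
        have hlnej : l ≠ j := by
          intro e; rw [e, hvjj] at hl2; exact hεA1 hl2.symm
        rw [hw2other l hlnei hlnej] at hl2
        exact Finset.mem_erase.mpr ⟨hlnei, Finset.mem_filter.mpr ⟨Finset.mem_univ l, hl2⟩⟩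
      calc (Finset.univ.filter
            (fun l => h.toFun (w2 l) (w2 l) = algebraMap R A ε)).card
          ≤ ((Finset.univ.filter
            (fun l => h.toFun (w l) (w l) = algebraMap R A ε)).erase i).card :=
            Finset.card_le_card hsub
        _ ≤ n := by
            rw [Finset.card_erase_of_mem hi]
            omega
  obtain ⟨v2, ⟨hor2, hent2⟩, hcard2⟩ := main _ v1 ⟨hor1, hent1⟩ le_rfl
  have hmlt : m - 1 < m := by omega
  -- move the possible ε to the last position
  obtain ⟨v3, hor3, hent3, hlast3⟩ : ∃ v3 : Module.Basis (Fin m) Aᵐᵒᵖ V,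
      (∀ i j : Fin m, i ≠ j → h.toFun (v3 i) (v3 j) = 0) ∧
      (∀ i : Fin m, i ≠ ⟨m - 1, hmlt⟩ → h.toFun (v3 i) (v3 i) = 1) ∧
      (h.toFun (v3 ⟨m - 1, hmlt⟩) (v3 ⟨m - 1, hmlt⟩) = 1 ∨
        h.toFun (v3 ⟨m - 1, hmlt⟩) (v3 ⟨m - 1, hmlt⟩) = algebraMap R A ε) := by
    by_cases hS0 : Finset.univ.filter
        (fun i => h.toFun (v2 i) (v2 i) = algebraMap R A ε) = ∅
    · have hall : ∀ i, h.toFun (v2 i) (v2 i) = 1 := by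
        intro i
        rcases hent2 i with h1 | h1
        · exact h1
        · exact absurd (Finset.mem_filter.mpr ⟨Finset.mem_univ i, h1⟩)
            (by rw [hS0]; exact Finset.notMem_empty i)
      exact ⟨v2, hor2, fun i _ => hall i, Or.inl (hall _)⟩
    · obtain ⟨i0, hi0⟩ : ∃ i0, Finset.univ.filter
          (fun i => h.toFun (v2 i) (v2 i) = algebraMap R A ε) = {i0} :=
        Finset.card_eq_one.mp (by
          have h1 : 1 ≤ (Finset.univ.filter
              (fun i => h.toFun (v2 i) (v2 i) = algebraMap R A ε)).card :=
            Finset.card_pos.mpr (Finset.nonempty_iff_ne_empty.mpr hS0)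
          omega)
      have hi0mem : i0 ∈ Finset.univ.filter
          (fun i => h.toFun (v2 i) (v2 i) = algebraMap R A ε) := by
        rw [hi0]; exact Finset.mem_singleton_self i0
      have hi0ε : h.toFun (v2 i0) (v2 i0) = algebraMap R A ε :=
        (Finset.mem_filter.mp hi0mem).2
      have hothers : ∀ l, l ≠ i0 → h.toFun (v2 l) (v2 l) = 1 := by
        intro l hl
        rcases hent2 l with h1 | h1
        · exact h1
        · refine absurd ?_ hl
          have hmem : l ∈ ({i0} : Finset (Fin m)) := by
            rw [← hi0]
            exact Finset.mem_filter.mpr ⟨Finset.mem_univ l, h1⟩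
          exact Finset.mem_singleton.mp hmem
      set σ : Equiv.Perm (Fin m) := Equiv.swap i0 ⟨m - 1, hmlt⟩ with hσ
      have happ : ∀ l, (v2.reindex σ) l = v2 (σ l) := by
        intro l; rw [Module.Basis.reindex_apply, hσ, Equiv.symm_swap]
      refine ⟨v2.reindex σ, ?_, ?_, ?_⟩
      · intro i j hij
        rw [happ, happ]
        exact hor2 _ _ (fun e => hij (σ.injective e))
      · intro i hi
        rw [happ]
        apply hothers
        intro e
        apply hi
        have := congrArg σ e
        rw [hσ] at this
        rw [Equiv.swap_apply_self, Equiv.swap_apply_left] at this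
        exact this
      · rw [happ, hσ, Equiv.swap_apply_right]
        exact Or.inr hi0ε
  -- final adjustment using norm-surjectivity if available
  by_cases hQ : ∀ r : R, IsUnit r → ∃ a : A, IsUnit a ∧ a * star a = algebraMap R A r
  · rcases hlast3 with hl1 | hlε
    · refine ⟨v3, hor3, ?_, fun _ => hl1, fun _ => Or.inl hl1⟩
      intro i hi
      exact hent3 i (fun e => by rw [e] at hi; exact lt_irrefl _ hi)
    · obtain ⟨a, ha, haa⟩ := hQ ↑hεu.unit⁻¹ hεu.unit⁻¹.isUnit
      have hua : (↑ha.unit : A) = a := ha.unit_spec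
      have h2a : star a * a = algebraMap R A (↑hεu.unit⁻¹ : R) := by
        calc star a * a = (↑ha.unit⁻¹ * ↑ha.unit) * (star a * a) := by
              rw [Units.inv_mul, one_mul]
          _ = ↑ha.unit⁻¹ * (a * (star a * a)) := by rw [mul_assoc, hua]
          _ = ↑ha.unit⁻¹ * ((a * star a) * a) := by rw [← mul_assoc a]
          _ = ↑ha.unit⁻¹ * (algebraMap R A (↑hεu.unit⁻¹ : R) * a) := by rw [haa]
          _ = ↑ha.unit⁻¹ * (a * algebraMap R A (↑hεu.unit⁻¹ : R)) := by
              rw [alg_comm hcent hfix]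
          _ = (↑ha.unit⁻¹ * a) * algebraMap R A (↑hεu.unit⁻¹ : R) := by rw [mul_assoc]
          _ = algebraMap R A (↑hεu.unit⁻¹ : R) := by
              rw [ha.val_inv_mul, one_mul]
      have hrepr : v3.repr (op a • v3 ⟨m - 1, hmlt⟩) ⟨m - 1, hmlt⟩ = op a := by
        rw [map_smul, Module.Basis.repr_self]
        simp [smul_eq_mul]
      obtain ⟨v4, hv4last, hv4other⟩ := basis_replace v3 ⟨m - 1, hmlt⟩
        (op a • v3 ⟨m - 1, hmlt⟩) (by rw [hrepr]; exact ha.op)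
      have hv4ll : h.toFun (v4 ⟨m - 1, hmlt⟩) (v4 ⟨m - 1, hmlt⟩) = 1 := by
        rw [hv4last, h.smul_left, h.smul_right, hlε]
        calc star a * (algebraMap R A ε * a)
            = star a * (a * algebraMap R A ε) := by rw [alg_comm hcent hfix]
          _ = (star a * a) * algebraMap R A ε := by rw [mul_assoc]
          _ = algebraMap R A ((↑hεu.unit⁻¹ : R) * ε) := by rw [h2a, ← map_mul]
          _ = 1 := by rw [hεu.val_inv_mul, map_one]
      have horth4 : ∀ p q : Fin m, p ≠ q → h.toFun (v4 p) (v4 q) = 0 := by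
        intro p q hpq
        by_cases hp : p = ⟨m - 1, hmlt⟩
        · have hq : q ≠ ⟨m - 1, hmlt⟩ := fun e => hpq (by rw [hp, e])
          rw [hp, hv4last, hv4other q hq, h.smul_left, hor3 _ q (fun e => hq e.symm),
            mul_zero]
        · by_cases hq : q = ⟨m - 1, hmlt⟩
          · rw [hq, hv4last, hv4other p hp, h.smul_right, hor3 p _ hp, zero_mul]
          · rw [hv4other p hp, hv4other q hq]
            exact hor3 p q hpq
      have hent4 : ∀ i : Fin m, i ≠ ⟨m - 1, hmlt⟩ → h.toFun (v4 i) (v4 i) = 1 := by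
        intro i hi
        rw [hv4other i hi]
        exact hent3 i hi
      refine ⟨v4, horth4, ?_, fun _ => hv4ll, fun _ => Or.inl hv4ll⟩
      intro i hi
      exact hent4 i (fun e => by rw [e] at hi; exact lt_irrefl _ hi)
  · refine ⟨v3, hor3, ?_, fun hq => absurd hq hQ, fun _ => hlast3⟩
    intro i hi
    exact hent3 i (fun e => by rw [e] at hi; exact lt_irrefl _ hi)
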